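/- Let S⁺, S⁻ be linear maps on d×d matrices with ‖S⁺‖_{∞→∞} ≤ s and ‖S⁻‖_{∞→∞} ≤ s for some s > 0. Define ∇⁽¹⁾ := identity and recursively ∇⁽ᵏ⁾[M] := ∑_{p=1}^{k-1} (S⁺ ∘ ∇⁽ᵖ⁾)[M] · (S⁻ ∘ ∇⁽ᵏ⁻ᵖ⁾)[M] for k ≥ 2 (matrix product). If ‖M‖ ≤ x/(4s²) for some x > 0, then ‖∇⁽ᵏ⁾[M]‖ ≤ (a_k/(2s²)) x^k for all k ≥ 1, where a_k = (-1)^{k+1} binom(1/2,k) are the Taylor coefficients of 1 - sqrt(1-x). -/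

import Mathlib

open Matrix

/-- The `ℓ₂ → ℓ₂` operator (spectral) norm of a square complex matrix. -/
noncomputable def opNorm {n : Type*} [Fintype n] [DecidableEq n]
    (A : Matrix n n ℂ) : ℝ :=
  ‖LinearMap.toContinuousLinearMap (Matrix.toEuclideanLin A)‖

/-- `aCoeff k = (-1)^(k+1) * binom(1/2, k)`, the Taylor coefficients of
`1 - sqrt (1 - x)`. -/
noncomputable def aCoeff (k : ℕ) : ℝ :=
  (-1 : ℝ) ^ (k + 1) * ((∏ i ∈ Finset.range k, ((1 : ℝ) / 2 - (i : ℝ))) / (k.factorial : ℝ))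

lemma opNorm_nonneg' {n : Type*} [Fintype n] [DecidableEq n] (A : Matrix n n ℂ) :
    0 ≤ opNorm A := norm_nonneg _

lemma toEuclideanLin_mul {n : Type*} [Fintype n] [DecidableEq n] (A B : Matrix n n ℂ) :
    Matrix.toEuclideanLin (A * B) =
      (Matrix.toEuclideanLin A).comp (Matrix.toEuclideanLin B) := by
  ext v i
  simp [Matrix.toEuclideanLin_apply, Matrix.mulVec_mulVec]

set_option maxHeartbeats 800000 in
lemma opNorm_mul_le' {n : Type*} [Fintype n] [DecidableEq n] (A B : Matrix n n ℂ) :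
    opNorm (A * B) ≤ opNorm A * opNorm B := by
  unfold opNorm
  have h : LinearMap.toContinuousLinearMap (Matrix.toEuclideanLin (A * B)) =
      (LinearMap.toContinuousLinearMap (Matrix.toEuclideanLin A)).comp
        (LinearMap.toContinuousLinearMap (Matrix.toEuclideanLin B)) := by
    ext v
    simp [toEuclideanLin_mul]
  rw [h]
  exact ContinuousLinearMap.opNorm_comp_le _ _

lemma opNorm_sum_le' {n ι : Type*} [Fintype n] [DecidableEq n] (s : Finset ι)
    (f : ι → Matrix n n ℂ) :
    opNorm (∑ i ∈ s, f i) ≤ ∑ i ∈ s, opNorm (f i) := by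
  unfold opNorm
  have : LinearMap.toContinuousLinearMap (Matrix.toEuclideanLin (∑ i ∈ s, f i)) =
      ∑ i ∈ s, LinearMap.toContinuousLinearMap (Matrix.toEuclideanLin (f i)) := by
    simp [map_sum]
  rw [this]
  exact norm_sum_le _ _

lemma catalan_pos' (n : ℕ) : 0 < catalan n := by
  have h := succ_mul_catalan_eq_centralBinom n
  have hc := Nat.centralBinom_pos n
  rcases Nat.eq_zero_or_pos (catalan n) with h0 | h1
  · rw [h0, mul_zero] at h; omega
  · exact h1

lemma catalan_rec (k : ℕ) :
    (k + 2) * catalan (k + 1) = 2 * (2 * k + 1) * catalan k := by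
  have h1 := succ_mul_catalan_eq_centralBinom (k + 1)
  have h2 := succ_mul_catalan_eq_centralBinom k
  have h3 := Nat.succ_mul_centralBinom_succ k
  have key : (k + 1) * ((k + 2) * catalan (k + 1)) =
      (k + 1) * (2 * (2 * k + 1) * catalan k) := by
    calc (k + 1) * ((k + 2) * catalan (k + 1))
        = (k + 1) * ((k + 1 + 1) * catalan (k + 1)) := by ring_nf
      _ = (k + 1) * Nat.centralBinom (k + 1) := by rw [h1]
      _ = 2 * (2 * k + 1) * Nat.centralBinom k := h3
      _ = 2 * (2 * k + 1) * ((k + 1) * catalan k) := by rw [h2]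
      _ = (k + 1) * (2 * (2 * k + 1) * catalan k) := by ring
  exact Nat.eq_of_mul_eq_mul_left (Nat.succ_pos k) key

lemma aCoeff_eq_catalan (k : ℕ) :
    aCoeff (k + 1) = (catalan k : ℝ) / (2 * 4 ^ k) := by
  induction k with
  | zero => simp [aCoeff]
  | succ k ih =>
    have hstep : aCoeff (k + 2) = aCoeff (k + 1) * (2 * k + 1) / (2 * (k + 2)) := by
      unfold aCoeff
      rw [Finset.prod_range_succ, Nat.factorial_succ]
      push_cast
      have hf : (Nat.factorial (k + 1) : ℝ) ≠ 0 := by positivity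
      field_simp
      ring
    rw [hstep, ih]
    have hc := catalan_rec k
    have hcR : ((k : ℝ) + 2) * catalan (k + 1) = 2 * (2 * k + 1) * catalan k := by
      exact_mod_cast hc
    have h4 : (4 : ℝ) ^ (k + 1) = 4 * 4 ^ k := by ring
    have hk2 : ((k : ℝ) + 2) ≠ 0 := by positivity
    have hp : (4 : ℝ) ^ k ≠ 0 := by positivity
    field_simp
    linear_combination (-2 * (4:ℝ) ^ k) * hcR

lemma aCoeff_pos (k : ℕ) (hk : 1 ≤ k) : 0 < aCoeff k := by
  obtain ⟨m, rfl⟩ := Nat.exists_eq_add_of_le hk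
  rw [add_comm, aCoeff_eq_catalan]
  have h := catalan_pos' m
  have : (0:ℝ) < (catalan m : ℝ) := by exact_mod_cast h
  positivity

lemma aCoeff_conv (k : ℕ) (hk : 2 ≤ k) :
    ∑ p ∈ Finset.Ico 1 k, aCoeff p * aCoeff (k - p) = 2 * aCoeff k := by
  obtain ⟨m, rfl⟩ := Nat.exists_eq_add_of_le hk
  rw [add_comm 2 m]
  have hre : ∑ p ∈ Finset.Ico 1 (m + 2), aCoeff p * aCoeff (m + 2 - p) =
      ∑ i ∈ Finset.range (m + 1), aCoeff (i + 1) * aCoeff (m + 1 - i) := by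
    rw [Finset.sum_Ico_eq_sum_range]
    refine Finset.sum_congr (by norm_num) fun i hi => ?_
    congr 2
    · omega
    · omega
  rw [hre]
  have hterm : ∀ i ∈ Finset.range (m + 1),
      aCoeff (i + 1) * aCoeff (m + 1 - i) =
        (catalan i : ℝ) * catalan (m - i) / (4 * 4 ^ m) := by
    intro i hi
    simp only [Finset.mem_range] at hi
    have him : i ≤ m := by omega
    have h1 : m + 1 - i = (m - i) + 1 := by omega
    rw [aCoeff_eq_catalan, h1, aCoeff_eq_catalan, div_mul_div_comm]
    congr 1
    rw [mul_mul_mul_comm, ← pow_add, show i + (m - i) = m from by omega]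
    norm_num
  rw [Finset.sum_congr rfl hterm, ← Finset.sum_div, show m + 2 = (m + 1) + 1 by rfl,
    aCoeff_eq_catalan]
  have hcs : (catalan (m + 1) : ℝ) =
      ∑ i ∈ Finset.range (m + 1), (catalan i : ℝ) * catalan (m - i) := by
    rw [catalan_succ]
    push_cast
    rw [← Fin.sum_univ_eq_sum_range (fun i => (catalan i : ℝ) * catalan (m - i))]
  rw [← hcs]
  have : (4 : ℝ) ^ m ≠ 0 := by positivity
  field_simp
  ring

/-- Recursive norm bound: if `‖S⁺‖, ‖S⁻‖ ≤ s` (induced spectral norms),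
`∇⁽¹⁾ = id` and `∇⁽ᵏ⁾[M] = ∑_{p=1}^{k-1} S⁺[∇⁽ᵖ⁾[M]] · S⁻[∇⁽ᵏ⁻ᵖ⁾[M]]` for
`k ≥ 2`, and `‖M‖ ≤ x/(4s²)`, then `‖∇⁽ᵏ⁾[M]‖ ≤ (a_k/(2s²)) xᵏ` for all
`k ≥ 1`. -/
theorem recursive_nabla_norm_bound (d : ℕ)
    (Sp Sm : Matrix (Fin d) (Fin d) ℂ →ₗ[ℂ] Matrix (Fin d) (Fin d) ℂ)
    (s x : ℝ) (hs : 0 < s) (hx : 0 < x)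
    (hSp : ∀ A, opNorm (Sp A) ≤ s * opNorm A)
    (hSm : ∀ A, opNorm (Sm A) ≤ s * opNorm A)
    (M : Matrix (Fin d) (Fin d) ℂ) (hM : opNorm M ≤ x / (4 * s ^ 2))
    (nabla : ℕ → Matrix (Fin d) (Fin d) ℂ)
    (hn1 : nabla 1 = M)
    (hnk : ∀ k, 2 ≤ k →
      nabla k = ∑ p ∈ Finset.Ico 1 k, Sp (nabla p) * Sm (nabla (k - p))) :
    ∀ k, 1 ≤ k → opNorm (nabla k) ≤ aCoeff k / (2 * s ^ 2) * x ^ k := by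
  intro k
  induction k using Nat.strong_induction_on with
  | _ k ih =>
    intro hk
    rcases eq_or_lt_of_le hk with h1 | h2
    · -- k = 1
      rw [← h1, hn1]
      have : aCoeff 1 = 1 / 2 := by simp [aCoeff]
      rw [this]
      calc opNorm M ≤ x / (4 * s ^ 2) := hM
        _ = 1 / 2 / (2 * s ^ 2) * x ^ 1 := by
            rw [pow_one, show (1:ℝ) / 2 / (2 * s ^ 2) = 1 / (4 * s ^ 2) from by ring,
              div_mul_eq_mul_div, one_mul]
    · -- k ≥ 2
      have hk2 : 2 ≤ k := h2
      rw [hnk k hk2]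
      calc opNorm (∑ p ∈ Finset.Ico 1 k, Sp (nabla p) * Sm (nabla (k - p)))
          ≤ ∑ p ∈ Finset.Ico 1 k, opNorm (Sp (nabla p) * Sm (nabla (k - p))) :=
            opNorm_sum_le' _ _
        _ ≤ ∑ p ∈ Finset.Ico 1 k, aCoeff p * aCoeff (k - p) * (x ^ k / (4 * s ^ 2)) := by
            refine Finset.sum_le_sum fun p hp => ?_
            simp only [Finset.mem_Ico] at hp
            obtain ⟨hp1, hpk⟩ := hp
            have hq1 : 1 ≤ k - p := by omega
            have hqk : k - p < k := by omega
            have ihp := ih p hpk hp1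
            have ihq := ih (k - p) hqk hq1
            have hnp : 0 ≤ opNorm (nabla p) := opNorm_nonneg' _
            have hnq : 0 ≤ opNorm (nabla (k - p)) := opNorm_nonneg' _
            have hbp : opNorm (Sp (nabla p)) ≤ s * (aCoeff p / (2 * s ^ 2) * x ^ p) :=
              (hSp _).trans (by nlinarith)
            have hbq : opNorm (Sm (nabla (k - p))) ≤
                s * (aCoeff (k - p) / (2 * s ^ 2) * x ^ (k - p)) :=
              (hSm _).trans (by nlinarith)
            have hap : 0 < aCoeff p := aCoeff_pos p hp1
            have haq : 0 < aCoeff (k - p) := aCoeff_pos _ hq1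
            calc opNorm (Sp (nabla p) * Sm (nabla (k - p)))
                ≤ opNorm (Sp (nabla p)) * opNorm (Sm (nabla (k - p))) := opNorm_mul_le' _ _
              _ ≤ (s * (aCoeff p / (2 * s ^ 2) * x ^ p)) *
                    (s * (aCoeff (k - p) / (2 * s ^ 2) * x ^ (k - p))) := by
                  apply mul_le_mul hbp hbq (opNorm_nonneg' _)
                  positivity
              _ = aCoeff p * aCoeff (k - p) * ((x ^ p * x ^ (k - p)) / (4 * s ^ 2)) := by
                  field_simp [hs.ne']; ring
              _ = aCoeff p * aCoeff (k - p) * (x ^ k / (4 * s ^ 2)) := by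
                  rw [← pow_add, Nat.add_sub_cancel' (le_of_lt hpk)]
        _ = (∑ p ∈ Finset.Ico 1 k, aCoeff p * aCoeff (k - p)) * (x ^ k / (4 * s ^ 2)) := by
            rw [Finset.sum_mul]
        _ = 2 * aCoeff k * (x ^ k / (4 * s ^ 2)) := by rw [aCoeff_conv k hk2]
        _ = aCoeff k / (2 * s ^ 2) * x ^ k := by field_simp [hs.ne']; ring
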